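/- Define C* : {0,1}^3 → ℤ by C*(X) = 0 if the Hamming weight of X is 0, C*(X) = 1 if the Hamming weight of X is 1 or 2, and C*(X) = 2 if the Hamming weight of X is 3. Then C* is an economic cost function, but for every n and every collection F = {f_1, f_2, f_3} of nonconstant Boolean functions on a common input x ∈ {0,1}^n, the multitask cost function C_F is not equal to C*. -/

import Mathlib

/-- A deterministic adaptive decision tree over inputs `x : Fin n → Bool`
with outputs in `β`. -/
inductive DTree (n : ℕ) (β : Type) : Type where
  | leaf : β → DTree n β
  | node : Fin n → DTree n β → DTree n β → DTree n β

namespace DTree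

/-- Evaluate a decision tree on an input. -/
def eval {n : ℕ} {β : Type} : DTree n β → (Fin n → Bool) → β
  | .leaf b, _ => b
  | .node i t0 t1, x => if x i then eval t1 x else eval t0 x

/-- Depth of a decision tree: the maximum number of queries on a root-to-leaf path. -/
def depth {n : ℕ} {β : Type} : DTree n β → ℕ
  | .leaf _ => 0
  | .node _ t0 t1 => 1 + max (depth t0) (depth t1)

end DTree

def treeOf {n : ℕ} {β : Type} (k : ℕ) (g : (Fin n → Bool) → β) : DTree n β :=
  if h : k < n then
    .node ⟨k, h⟩ (treeOf (k+1) (fun x => g (Function.update x ⟨k, h⟩ false)))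
                 (treeOf (k+1) (fun x => g (Function.update x ⟨k, h⟩ true)))
  else .leaf (g (fun _ => false))
  termination_by n - k

lemma treeOf_eval {n : ℕ} {β : Type} (k : ℕ) (g : (Fin n → Bool) → β)
    (x : Fin n → Bool) :
    (treeOf k g).eval x = g (fun i => if k ≤ i.val then x i else false) := by
  unfold treeOf
  split
  · rename_i h
    simp only [DTree.eval]
    by_cases hx : x ⟨k, h⟩
    · rw [if_pos hx, treeOf_eval (k+1)]
      congr 1
      funext i
      rcases eq_or_ne i (⟨k, h⟩ : Fin n) with rfl | hne
      · simp [hx]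
      · have : i.val ≠ k := fun hh => hne (Fin.ext hh)
        simp only [Function.update_of_ne hne]
        by_cases hk : k ≤ i.val
        · rw [if_pos (by omega), if_pos hk]
        · rw [if_neg (by omega), if_neg hk]
    · rw [if_neg hx, treeOf_eval (k+1)]
      congr 1
      funext i
      rcases eq_or_ne i (⟨k, h⟩ : Fin n) with rfl | hne
      · simp [Bool.eq_false_iff.mpr hx]
      · have : i.val ≠ k := fun hh => hne (Fin.ext hh)
        simp only [Function.update_of_ne hne]
        by_cases hk : k ≤ i.val
        · rw [if_pos (by omega), if_pos hk]
        · rw [if_neg (by omega), if_neg hk]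
  · rename_i h
    simp only [DTree.eval]
    congr 1
    funext i
    have : i.val < n := i.isLt
    rw [if_neg (by omega)]
  termination_by n - k

lemma treeOf_eval_zero {n : ℕ} {β : Type} (g : (Fin n → Bool) → β) (x : Fin n → Bool) :
    (treeOf 0 g).eval x = g x := by
  rw [treeOf_eval]; congr 1


/-- The multitask cost `C_F(X)`: the minimum depth of a decision tree which,
on input `x`, outputs the value `F i x` for every `i` with `X i = true`. -/
noncomputable def multitaskCost {n l : ℕ} (F : Fin l → (Fin n → Bool) → Bool)
    (X : Fin l → Bool) : ℕ :=
  sInf {d | ∃ T : DTree n (Fin l → Bool), T.depth ≤ d ∧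
    ∀ (x : Fin n → Bool) (i : Fin l), X i = true → T.eval x i = F i x}

/-- An economic cost function: nonnegative (zero exactly at `0`), monotone,
and subadditive with respect to coordinatewise OR. -/
def IsEconomicCost {l : ℕ} (C : (Fin l → Bool) → ℤ) : Prop :=
  (∀ X, 0 ≤ C X) ∧
  (∀ X, C X = 0 ↔ X = fun _ => false) ∧
  (∀ X Y : Fin l → Bool, (∀ i, X i = true → Y i = true) → C X ≤ C Y) ∧
  (∀ X Y : Fin l → Bool, C (fun i => X i || Y i) ≤ C X + C Y)

/-- The function `C*` on `{0,1}^3`: `0` at Hamming weight `0`, `1` at weights `1, 2`,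
and `2` at weight `3`. -/
def Cstar (X : Fin 3 → Bool) : ℤ :=
  if (Finset.univ.filter (fun i : Fin 3 => X i = true)).card = 0 then 0
  else if (Finset.univ.filter (fun i : Fin 3 => X i = true)).card = 3 then 2
  else 1

lemma multitask_set_nonempty {n l : ℕ} (F : Fin l → (Fin n → Bool) → Bool)
    (X : Fin l → Bool) :
    {d | ∃ T : DTree n (Fin l → Bool), T.depth ≤ d ∧
      ∀ (x : Fin n → Bool) (i : Fin l), X i = true → T.eval x i = F i x}.Nonempty := by
  refine ⟨(treeOf 0 (fun x i => F i x)).depth, treeOf 0 (fun x i => F i x), le_refl _, ?_⟩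
  intro x i _
  rw [treeOf_eval_zero]

lemma multitask_mem {n l : ℕ} (F : Fin l → (Fin n → Bool) → Bool) (X : Fin l → Bool) :
    ∃ T : DTree n (Fin l → Bool), T.depth ≤ multitaskCost F X ∧
      ∀ (x : Fin n → Bool) (i : Fin l), X i = true → T.eval x i = F i x :=
  Nat.sInf_mem (multitask_set_nonempty F X)

lemma multitask_le {n l : ℕ} (F : Fin l → (Fin n → Bool) → Bool) (X : Fin l → Bool)
    (T : DTree n (Fin l → Bool)) (d : ℕ) (hd : T.depth ≤ d)
    (hT : ∀ (x : Fin n → Bool) (i : Fin l), X i = true → T.eval x i = F i x) :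
    multitaskCost F X ≤ d :=
  Nat.sInf_le ⟨T, hd, hT⟩

lemma depth_le_one {n : ℕ} {β : Type} (T : DTree n β) (h : T.depth ≤ 1) :
    (∃ b, T = .leaf b) ∨ ∃ q b0 b1, T = .node q (.leaf b0) (.leaf b1) := by
  cases T with
  | leaf b => exact Or.inl ⟨b, rfl⟩
  | node q t0 t1 =>
    simp only [DTree.depth] at h
    have h0 : t0.depth = 0 := by omega
    have h1 : t1.depth = 0 := by omega
    cases t0 with
    | leaf b0 =>
      cases t1 with
      | leaf b1 => exact Or.inr ⟨q, b0, b1, rfl⟩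
      | node _ _ _ => simp [DTree.depth] at h1
    | node _ _ _ => simp [DTree.depth] at h0

/-- From a pair `{i, j}` with cost 1 we extract a query bit on which both
`F i` and `F j` depend. -/
lemma pair_extract {n : ℕ} (F : Fin 3 → (Fin n → Bool) → Bool)
    (i j : Fin 3) (hne : i ≠ j)
    (hFi : ∃ x y : Fin n → Bool, F i x ≠ F i y)
    (hcost : multitaskCost F (fun k => decide (k = i) || decide (k = j)) = 1) :
    ∃ (q : Fin n) (ui vi uj vj : Bool),
      (∀ x, F i x = if x q then ui else vi) ∧
      (∀ x, F j x = if x q then uj else vj) := by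
  obtain ⟨T, hd, hT⟩ := multitask_mem F (fun k => decide (k = i) || decide (k = j))
  rw [hcost] at hd
  rcases depth_le_one T hd with ⟨b, rfl⟩ | ⟨q, b0, b1, rfl⟩
  · exfalso
    obtain ⟨x, y, hxy⟩ := hFi
    have hx := hT x i (by simp)
    have hy := hT y i (by simp)
    simp only [DTree.eval] at hx hy
    exact hxy (hx ▸ hy ▸ rfl)
  · refine ⟨q, b1 i, b0 i, b1 j, b0 j, ?_, ?_⟩
    · intro x
      have := hT x i (by simp)
      simp only [DTree.eval] at this
      by_cases hx : x q <;> simp [hx] at this ⊢ <;> exact this.symm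
    · intro x
      have := hT x j (by simp)
      simp only [DTree.eval] at this
      by_cases hx : x q <;> simp [hx] at this ⊢ <;> exact this.symm

/-- `C*` is an economic cost function, yet it is not the multitask cost
function of any collection of three nonconstant Boolean functions. -/
theorem Cstar_econ_not_multitask :
    IsEconomicCost Cstar ∧
    ∀ (n : ℕ) (F : Fin 3 → (Fin n → Bool) → Bool),
      (∀ i : Fin 3, ∃ x y : Fin n → Bool, F i x ≠ F i y) →
      (fun X => (multitaskCost F X : ℤ)) ≠ Cstar := by
  constructor
  · unfold IsEconomicCost Cstar
    refine ⟨by decide, by decide, by decide, by decide⟩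
  · intro n F hF h
    have hX : ∀ X, (multitaskCost F X : ℤ) = Cstar X := fun X => congrFun h X
    have h01 : multitaskCost F (fun k => decide (k = (0 : Fin 3)) || decide (k = 1)) = 1 := by
      have := hX (fun k => decide (k = (0 : Fin 3)) || decide (k = 1))
      have hc : Cstar (fun k => decide (k = (0 : Fin 3)) || decide (k = 1)) = 1 := by decide
      rw [hc] at this; exact_mod_cast this
    have h02 : multitaskCost F (fun k => decide (k = (0 : Fin 3)) || decide (k = 2)) = 1 := by
      have := hX (fun k => decide (k = (0 : Fin 3)) || decide (k = 2))
      have hc : Cstar (fun k => decide (k = (0 : Fin 3)) || decide (k = 2)) = 1 := by decide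
      rw [hc] at this; exact_mod_cast this
    have hfull : multitaskCost F (fun _ => true) = 2 := by
      have := hX (fun _ => true)
      have hc : Cstar (fun _ => true) = 2 := by decide
      rw [hc] at this; exact_mod_cast this
    obtain ⟨q1, u1, v1, u1', v1', hF0a, hF1⟩ := pair_extract F 0 1 (by decide) (hF 0) h01
    obtain ⟨q2, u2, v2, u2', v2', hF0b, hF2⟩ := pair_extract F 0 2 (by decide) (hF 0) h02
    have hq : q1 = q2 := by
      by_contra hq
      obtain ⟨x, y, hxy⟩ := hF 0
      have huv : u1 ≠ v1 := by
        intro he; apply hxy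
        rw [hF0a x, hF0a y, he]
        cases hx : x q1 <;> cases hy : y q1 <;> simp
      have hz1 : (fun i => decide (i = q1)) q1 = true := by simp
      have hz2 : (fun i => decide (i = q1)) q2 = false := by
        simp only [decide_eq_false_iff_not]
        exact fun hh => hq hh.symm
      have hw : F 0 (fun _ => false) = v1 := by rw [hF0a]; simp
      have hw2 : F 0 (fun _ => false) = v2 := by rw [hF0b]; simp
      have hz' : F 0 (fun i => decide (i = q1)) = u1 := by rw [hF0a]; simp
      have hz'' : F 0 (fun i => decide (i = q1)) = v2 := by
        rw [hF0b]; simp [show q2 ≠ q1 from fun hh => hq hh.symm]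
      exact huv (by rw [← hz', hz'', ← hw2, hw])
    subst hq
    have hle : multitaskCost F (fun _ => true) ≤ 1 := by
      refine multitask_le F _
        (DTree.node q1 (DTree.leaf ![v1, v1', v2']) (DTree.leaf ![u1, u1', u2'])) 1 ?_ ?_
      · simp [DTree.depth]
      · intro x i _
        fin_cases i <;> simp [DTree.eval, hF0a, hF1, hF2] <;>
          by_cases hx : x q1 <;> simp [hx]
    omega
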